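/- Let (▷, f, ·_V) be a crossed system of a 4-algebra A by V. The map ϑ sending (r, α) ∈ 𝒢 to the automorphism (x,a) ↦ (x + r(a), α(a)) of V # A is a group isomorphism from (𝒢, •) onto the Galois group Gal(V # A / V) of all 4-algebra automorphisms of V # A that fix V pointwise. -/
import Mathlib


structure FourAlgebra (k : Type*) (A : Type*) [Field k] [AddCommGroup A] [Module k A] where
  mul : A →ₗ[k] A →ₗ[k] A
  comm : ∀ a b : A, mul a b = mul b a
  four : ∀ a : A, mul (mul a a) (mul a a) = 0

def thetaEquiv {k A V : Type*} [Field k] [AddCommGroup A] [Module k A]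
    [AddCommGroup V] [Module k V] (r : A →ₗ[k] V) (α : A ≃ₗ[k] A) :
    (V × A) ≃ₗ[k] (V × A) where
  toFun z := (z.1 + r z.2, α z.2)
  invFun z := (z.1 - r (α.symm z.2), α.symm z.2)
  map_add' z w := by
    refine Prod.ext ?_ (by simp)
    simp only [Prod.fst_add, Prod.snd_add, map_add]
    abel
  map_smul' c z := by
    simp [Prod.smul_mk, smul_add]
  left_inv z := by simp
  right_inv z := by simp

/-- The map ϑ(r,α) : (x,a) ↦ (x + r(a), α(a)) is a group isomorphism from the group
𝒢 = 𝒢_A^V(▷,f,·_V) (with multiplication (r,α)•(r',α') = (r'+r∘α', α∘α')) onto the Galois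
group Gal(V # A / V) of 4-algebra automorphisms of the crossed product V # A fixing V
pointwise (with composition as multiplication). -/
theorem stmt16 (k A V : Type*) [Field k] [AddCommGroup A] [Module k A]
    [AddCommGroup V] [Module k V] (h2 : (2 : k) ≠ 0) (FA : FourAlgebra k A)
    (tr : A →ₗ[k] V →ₗ[k] V) (f : A →ₗ[k] A →ₗ[k] V) (mv : V →ₗ[k] V →ₗ[k] V) :
    let p : V × A → V × A → V × A := fun z w =>
      (mv z.1 w.1 + tr z.2 w.1 + tr w.2 z.1 + f z.2 w.2, FA.mul z.2 w.2)
    -- (▷, f, ·_V) is a crossed system: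
    ((∀ z w, p z w = p w z) ∧ (∀ z, p (p z z) (p z z) = 0)) →
    -- the group 𝒢:
    let G : Set ((A →ₗ[k] V) × (A ≃ₗ[k] A)) := {q |
      (∀ a b : A, q.2 (FA.mul a b) = FA.mul (q.2 a) (q.2 b)) ∧
      (∀ (a : A) (x : V), tr a x = tr (q.2 a) x + mv (q.1 a) x) ∧
      (∀ a b : A, f a b = f (q.2 a) (q.2 b) + tr (q.2 a) (q.1 b) + tr (q.2 b) (q.1 a)
        + mv (q.1 a) (q.1 b) - q.1 (FA.mul a b))}
    -- the Galois group Gal(V # A / V):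
    let Gal : Set ((V × A) ≃ₗ[k] (V × A)) := {φ |
      (∀ z w : V × A, φ (p z w) = p (φ z) (φ w)) ∧ (∀ x : V, φ (x, 0) = ((x, 0) : V × A))}
    ∃ ϑ : G → Gal,
      Function.Bijective ϑ ∧
      -- ϑ is given by the stated formula:
      (∀ q : G, ∀ z : V × A, (ϑ q : (V × A) ≃ₗ[k] (V × A)) z
          = (z.1 + q.1.1 z.2, q.1.2 z.2)) ∧
      -- ϑ is a group homomorphism: ϑ((r,α)•(r',α')) = ϑ(r,α) ∘ ϑ(r',α'):
      (∀ q q' : G,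
        ∀ h : ((q'.1.1 + q.1.1.comp (q'.1.2 : A →ₗ[k] A), q'.1.2.trans q.1.2)
                 : (A →ₗ[k] V) × (A ≃ₗ[k] A)) ∈ G,
        (ϑ ⟨(q'.1.1 + q.1.1.comp (q'.1.2 : A →ₗ[k] A), q'.1.2.trans q.1.2), h⟩
            : (V × A) ≃ₗ[k] (V × A))
          = ((ϑ q' : (V × A) ≃ₗ[k] (V × A)).trans (ϑ q : (V × A) ≃ₗ[k] (V × A)))) := by
  intro p hp G Gal
  -- commutativity of mv
  have hmv : ∀ x y : V, mv x y = mv y x := by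
    intro x y
    have := congrArg Prod.fst (hp.1 (x, 0) (y, 0))
    simpa [p] using this
  -- each thetaEquiv for q ∈ G lies in Gal
  have hmem : ∀ q : G, thetaEquiv q.1.1 q.1.2 ∈ Gal := by
    rintro ⟨⟨r, α⟩, hq1, hq2, hq3⟩
    constructor
    · rintro ⟨z1, z2⟩ ⟨w1, w2⟩
      simp only [p, thetaEquiv, LinearEquiv.coe_mk, LinearMap.coe_mk, AddHom.coe_mk]
      refine Prod.ext ?_ (hq1 z2 w2)
      simp only [map_add, LinearMap.add_apply]
      have e2 : tr z2 w1 = tr (α z2) w1 + mv (r z2) w1 := hq2 z2 w1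
      have e2' : tr w2 z1 = tr (α w2) z1 + mv (r w2) z1 := hq2 w2 z1
      have e3 : f z2 w2 = f (α z2) (α w2) + tr (α z2) (r w2) + tr (α w2) (r z2)
          + mv (r z2) (r w2) - r (FA.mul z2 w2) := hq3 z2 w2
      rw [e2, e2', e3, hmv (r w2) z1]
      abel
    · intro x
      simp [thetaEquiv]
  refine ⟨fun q => ⟨thetaEquiv q.1.1 q.1.2, hmem q⟩, ?_, ?_, ?_⟩
  · constructor
    · rintro ⟨⟨r, α⟩, hq⟩ ⟨⟨r', α'⟩, hq'⟩ h
      have h' : thetaEquiv r α = thetaEquiv r' α' := congrArg Subtype.val h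
      have key : ∀ a : A, (thetaEquiv r α) ((0 : V), a) = (thetaEquiv r' α') ((0 : V), a) := by
        intro a; rw [h']
      have hr : r = r' := by
        ext a
        have := congrArg Prod.fst (key a)
        simpa [thetaEquiv] using this
      have ha : α = α' := by
        ext a
        have := congrArg Prod.snd (key a)
        simpa [thetaEquiv] using this
      exact Subtype.ext (Prod.ext hr ha)
    · rintro ⟨φ, hφmul, hφV⟩
      set r : A →ₗ[k] V := (LinearMap.fst k V A).comp (φ.toLinearMap.comp (LinearMap.inr k V A))
        with hr
      set αm : A →ₗ[k] A := (LinearMap.snd k V A).comp (φ.toLinearMap.comp (LinearMap.inr k V A))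
        with hα
      have key : ∀ z : V × A, φ z = (z.1 + r z.2, αm z.2) := by
        intro z
        have hz : z = ((z.1, 0) : V × A) + ((0 : V), z.2) := by simp
        rw [hz, map_add, hφV z.1]
        simp [hr, hα, Prod.ext_iff]
      have hbij : Function.Bijective αm := by
        constructor
        · intro a b hab
          have hc : αm (a - b) = 0 := by rw [map_sub, hab, sub_self]
          have e1 : φ ((0 : V), a - b) = ((r (a - b) : V), (0 : A)) := by
            rw [key]; simp [hc]
          have e2 : φ ((r (a - b) : V), (0 : A)) = ((r (a - b) : V), (0 : A)) := hφV _
          have e3 := φ.injective (e1.trans e2.symm)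
          have := congrArg Prod.snd e3
          simpa [sub_eq_zero] using this
        · intro b
          obtain ⟨z, hz⟩ := φ.surjective ((0 : V), b)
          refine ⟨z.2, ?_⟩
          have := congrArg Prod.snd ((key z).symm.trans hz)
          simpa using this
      set α : A ≃ₗ[k] A := LinearEquiv.ofBijective αm hbij with hαdef
      have hαm : ∀ a : A, α a = αm a := fun a => rfl
      -- derive the G conditions
      have cond2 : ∀ (a : A) (x : V), tr a x = tr (αm a) x + mv (r a) x := by
        intro a x
        have h := hφmul ((x : V), (0 : A)) ((0 : V), a)
        have hl : p ((x : V), (0 : A)) ((0 : V), a) = ((tr a x : V), (0 : A)) := by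
          simp [p]
        rw [hl, hφV, key ((x : V), (0 : A)), key ((0 : V), a)] at h
        have := congrArg Prod.fst h
        simp [p] at this
        rw [this, hmv x (r a)]
        abel
      have condsnd : ∀ a b : A, αm (FA.mul a b) = FA.mul (αm a) (αm b) := by
        intro a b
        have h := hφmul ((0 : V), a) ((0 : V), b)
        rw [key, key, key] at h
        have := congrArg Prod.snd h
        simpa [p] using this
      have cond3 : ∀ a b : A, f a b = f (αm a) (αm b) + tr (αm a) (r b) + tr (αm b) (r a)
          + mv (r a) (r b) - r (FA.mul a b) := by
        intro a b
        have h := hφmul ((0 : V), a) ((0 : V), b)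
        rw [key, key, key] at h
        have := congrArg Prod.fst h
        simp [p] at this
        rw [eq_sub_iff_add_eq]
        rw [this]
        abel
      have hG : ((r, α) : (A →ₗ[k] V) × (A ≃ₗ[k] A)) ∈ G := ⟨condsnd, cond2, cond3⟩
      refine ⟨⟨(r, α), hG⟩, ?_⟩
      apply Subtype.ext
      apply LinearEquiv.ext
      intro z
      exact (key z).symm
  · intro q z; rfl
  · intro q q' h
    apply LinearEquiv.ext
    intro z
    simp only [thetaEquiv, LinearEquiv.coe_mk, LinearMap.coe_mk, AddHom.coe_mk,
      LinearEquiv.trans_apply, LinearMap.add_apply, LinearMap.coe_comp, Function.comp_apply,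
      LinearEquiv.coe_coe]
    refine Prod.ext ?_ rfl
    abel
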